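/- Let E be a real inner product space and let g_B, g_T ∈ E with g_B ≠ g_T. Let α* = max 0 (min 1 (⟪g_T − g_B, g_T⟫ / ‖g_T − g_B‖²)). Then for every α ∈ [0, 1], ‖α*·g_B + (1 − α*)·g_T‖ ≤ ‖α·g_B + (1 − α)·g_T‖; that is, α* minimizes α ↦ ‖α·g_B + (1 − α)·g_T‖² over [0, 1]. -/

import Mathlib

open RealInnerProductSpace

/-- Closed-form solution of the two-objective Multiple-Gradient Descent subproblem:
`α* = clamp₍₀,₁₎ (⟪g_T − g_B, g_T⟫ / ‖g_T − g_B‖²)` minimizes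
`α ↦ ‖α g_B + (1 − α) g_T‖` over `[0, 1]`. -/
theorem mgda_two_objective_closed_form
    {E : Type*} [NormedAddCommGroup E] [InnerProductSpace ℝ E]
    (gB gT : E) (hne : gB ≠ gT) :
    ∀ α ∈ Set.Icc (0 : ℝ) 1,
      ‖(max 0 (min 1 (⟪gT - gB, gT⟫ / ‖gT - gB‖ ^ 2))) • gB
          + (1 - max 0 (min 1 (⟪gT - gB, gT⟫ / ‖gT - gB‖ ^ 2))) • gT‖
        ≤ ‖α • gB + (1 - α) • gT‖ := by
  intro α hα
  obtain ⟨hα0, hα1⟩ := hα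
  set v := gT - gB with hv
  have hvne : v ≠ 0 := sub_ne_zero.mpr (Ne.symm hne)
  have hv2 : (0:ℝ) < ‖v‖ ^ 2 := pow_pos (norm_pos_iff.mpr hvne) 2
  set t : ℝ := ⟪v, gT⟫ / ‖v‖ ^ 2 with ht
  set c : ℝ := max 0 (min 1 t) with hc
  have hinner : ⟪v, gT⟫ = t * ‖v‖ ^ 2 := by
    rw [ht, div_mul_cancel₀ _ hv2.ne']
  have key : ∀ β : ℝ, ‖β • gB + (1 - β) • gT‖ ^ 2
      = ‖v‖ ^ 2 * β ^ 2 - 2 * ⟪v, gT⟫ * β + ‖gT‖ ^ 2 := by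
    intro β
    have h1 : β • gB + (1 - β) • gT = gT - β • v := by
      rw [hv]; module
    rw [h1, @norm_sub_sq_real, real_inner_smul_right, norm_smul, mul_pow,
      real_inner_comm]
    simp [abs_sq]
    ring
  have hcsq : (c - t) ^ 2 ≤ (α - t) ^ 2 := by
    rcases le_total t 0 with h | h
    · have hc0 : c = 0 := by
        rw [hc, min_eq_right (h.trans zero_le_one), max_eq_left h]
      rw [hc0]; nlinarith
    · rcases le_total 1 t with h1 | h1
      · have hc1 : c = 1 := by
          rw [hc, min_eq_left h1, max_eq_right zero_le_one]
        rw [hc1]; nlinarith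
      · have hct : c = t := by
          rw [hc, min_eq_right h1, max_eq_right h]
        rw [hct]; nlinarith [sq_nonneg (α - t)]
  have hsq : ‖c • gB + (1 - c) • gT‖ ^ 2 ≤ ‖α • gB + (1 - α) • gT‖ ^ 2 := by
    rw [key c, key α, hinner]
    nlinarith [hv2, hcsq]
  exact (pow_le_pow_iff_left₀ (norm_nonneg _) (norm_nonneg _) two_ne_zero).mp hsq
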